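/- Let k ≥ 2 and let G be a graph on n vertices containing no path on k vertices as a subgraph. Then the number of edges of G satisfies e(G) ≤ (k-2)n/2. -/

import Mathlib

open Finset

namespace EG

variable {V : Type*} [Fintype V] [DecidableEq V] (G : SimpleGraph V) [DecidableRel G.Adj]

/-- Degree of `v` into the set `S`. -/
def d (S : Finset V) (v : V) : ℕ := (S.filter (G.Adj v)).card

/-- Twice the number of edges inside `S` (ordered adjacent pairs in `S`). -/
def E2 (S : Finset V) : ℕ := ∑ v ∈ S, d G S v

lemma toWalk : ∀ (l : List V) (v : V), List.Chain G.Adj v l →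
    ∃ w, ∃ p : G.Walk v w, p.support = v :: l := by
  intro l
  induction l with
  | nil => exact fun v _ => ⟨v, SimpleGraph.Walk.nil, rfl⟩
  | cons a t ih =>
    intro v hc
    replace hc : G.Adj v a ∧ List.Chain G.Adj a t := List.isChain_cons_cons.1 hc
    obtain ⟨w, p, hp⟩ := ih a hc.2
    exact ⟨w, SimpleGraph.Walk.cons hc.1 p, by simp [hp]⟩

lemma chain_lt {k : ℕ} (hk : 2 ≤ k)
    (hPfree : ∀ (u v : V) (p : G.Walk u v), p.IsPath → p.length + 1 < k) :
    ∀ l : List V, l.Chain' G.Adj → l.Nodup → l.length < k := by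
  intro l hc hnd
  match l with
  | [] => simpa using Nat.lt_of_lt_of_le Nat.zero_lt_two hk
  | v :: t =>
    obtain ⟨w, p, hp⟩ := toWalk G t v hc
    have hpath : p.IsPath := by rw [SimpleGraph.Walk.isPath_def, hp]; exact hnd
    have := hPfree v w p hpath
    have hlen : p.support.length = p.length + 1 := p.length_support
    rw [hp] at hlen
    simpa [← hlen] using this

lemma d_le (S : Finset V) (v : V) (hv : v ∈ S) : d G S v ≤ S.card - 1 := by
  have h : S.filter (G.Adj v) ⊆ S.erase v := by
    intro u hu
    simp only [mem_filter] at hu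
    exact mem_erase.2 ⟨fun he => G.irrefl (he ▸ hu.2), hu.1⟩
  calc d G S v ≤ (S.erase v).card := card_le_card h
    _ = S.card - 1 := card_erase_of_mem hv

lemma d_erase (S : Finset V) (v : V) : d G (S.erase v) v = d G S v := by
  unfold d
  congr 1
  ext u
  simp only [mem_filter, mem_erase]
  constructor
  · rintro ⟨⟨_, hu⟩, ha⟩; exact ⟨hu, ha⟩
  · rintro ⟨hu, ha⟩; exact ⟨⟨fun he => G.irrefl (he ▸ ha), hu⟩, ha⟩

lemma E2_erase (S : Finset V) (v : V) (hv : v ∈ S) :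
    E2 G S = E2 G (S.erase v) + 2 * d G S v := by
  unfold E2
  rw [← Finset.sum_erase_add _ _ hv]
  have h1 : ∀ u ∈ S.erase v, d G S u = d G (S.erase v) u + (if G.Adj u v then 1 else 0) := by
    intro u hu
    unfold d
    by_cases h : G.Adj u v
    · rw [if_pos h]
      have : S.filter (G.Adj u) = insert v ((S.erase v).filter (G.Adj u)) := by
        ext x
        simp only [mem_filter, mem_insert, mem_erase]
        constructor
        · rintro ⟨hx, ha⟩
          by_cases hxv : x = v
          · exact Or.inl hxv
          · exact Or.inr ⟨⟨hxv, hx⟩, ha⟩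
        · rintro (rfl | ⟨⟨_, hx⟩, ha⟩)
          · exact ⟨hv, h⟩
          · exact ⟨hx, ha⟩
      rw [this, card_insert_of_notMem (by simp)]
    · rw [if_neg h]
      congr 1
      ext x
      simp only [mem_filter, mem_erase]
      constructor
      · rintro ⟨hx, ha⟩
        refine ⟨⟨fun he => h (he ▸ ha), hx⟩, ha⟩
      · rintro ⟨⟨_, hx⟩, ha⟩; exact ⟨hx, ha⟩
  rw [Finset.sum_congr rfl h1, Finset.sum_add_distrib]
  have h2 : (∑ u ∈ S.erase v, if G.Adj u v then 1 else 0) = d G (S.erase v) v := by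
    rw [← Finset.card_filter]
    unfold d
    congr 1
    ext u
    simp only [mem_filter]
    exact and_congr_right fun _ => ⟨fun h => h.symm, fun h => h.symm⟩
  rw [h2, d_erase]
  have := d_erase G S v
  omega

lemma E2_split (S A : Finset V) (hA : A ⊆ S)
    (hcross : ∀ a ∈ A, ∀ b ∈ S \ A, ¬ G.Adj a b) :
    E2 G S = E2 G A + E2 G (S \ A) := by
  unfold E2
  rw [← Finset.sum_sdiff hA]
  have hA' : ∀ a ∈ A, d G S a = d G A a := by
    intro a ha
    unfold d
    congr 1
    ext x
    simp only [mem_filter]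
    constructor
    · rintro ⟨hx, hadj⟩
      refine ⟨?_, hadj⟩
      by_contra hxA
      exact hcross a ha x (mem_sdiff.2 ⟨hx, hxA⟩) hadj
    · rintro ⟨hx, hadj⟩; exact ⟨hA hx, hadj⟩
  have hB' : ∀ b ∈ S \ A, d G S b = d G (S \ A) b := by
    intro b hb
    unfold d
    congr 1
    ext x
    simp only [mem_filter, mem_sdiff]
    constructor
    · rintro ⟨hx, hadj⟩
      refine ⟨⟨hx, ?_⟩, hadj⟩
      intro hxA
      exact hcross x hxA b hb (hadj.symm)
    · rintro ⟨⟨hx, _⟩, hadj⟩; exact ⟨hx, hadj⟩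
  rw [Finset.sum_congr rfl hB', Finset.sum_congr rfl hA', Nat.add_comm]

/-- The key "rotation" step: a connected set with min degree ≥ (k-1)/2 and at least k
vertices contains a k-vertex path; contradiction with path-freeness. -/
lemma chain'_rotate_of_cyclic {α : Type*} {R : α → α → Prop} {c : List α}
    (hc : List.Chain' R c) (hcyc : ∀ x ∈ c.getLast?, ∀ y ∈ c.head?, R x y)
    {j : ℕ} (hj : j ≤ c.length) : List.Chain' R (c.rotate j) := by
  rw [List.rotate_eq_drop_append_take hj]
  refine (hc.drop j).append (hc.take j) ?_
  intro x hx y hy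
  rcases Nat.eq_or_lt_of_le hj with heq | hjlt
  · rw [heq, List.drop_length] at hx
    simp at hx
  · by_cases hj0 : j = 0
    · subst hj0
      rw [List.take_zero] at hy
      simp at hy
    · rw [List.getLast?_drop, if_neg (by omega)] at hx
      rw [List.head?_take, if_neg hj0] at hy
      exact hcyc x hx y hy

lemma big_component_false (k : ℕ) (hk : 2 ≤ k) (S : Finset V)
    (hfree : ∀ l : List V, l.Chain' G.Adj → l.Nodup → l.length < k)
    (hdeg : ∀ v ∈ S, k - 1 ≤ 2 * d G S v)
    (hconn : ∀ u ∈ S, ∀ w ∈ S,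
      Relation.ReflTransGen (fun a b => a ∈ S ∧ b ∈ S ∧ G.Adj a b) u w)
    (hcard : k ≤ S.card) : False := by
  classical
  obtain ⟨v0, hv0⟩ : S.Nonempty := Finset.card_pos.1 (by omega)
  set P : ℕ → Prop := fun j => ∃ l : List V,
    l.Chain' G.Adj ∧ l.Nodup ∧ (∀ x ∈ l, x ∈ S) ∧ l.length = j with hP
  have hP1 : P 1 := ⟨[v0], List.isChain_singleton _, by simp, by simpa, rfl⟩
  have h1k : 1 ≤ k := by omega
  have hm := Nat.findGreatest_spec h1k hP1
  set m := Nat.findGreatest P k with hmdef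
  obtain ⟨l, hchain, hnd, hmemS, hlen⟩ := hm
  have hmk : m < k := hlen ▸ hfree l hchain hnd
  have hmax : ¬ P (m + 1) := Nat.findGreatest_is_greatest (n := k) (by omega) (by omega)
  have hm1 : 1 ≤ m := Nat.le_findGreatest h1k hP1
  have hlnil : l ≠ [] := by
    intro h
    rw [h] at hlen
    simp at hlen
    omega
  -- no extension at the head of a maximal chain
  have hnoext : ∀ (t : List V) (ht : t ≠ []) (u : V), t.Chain' G.Adj → t.Nodup →
      (∀ x ∈ t, x ∈ S) → t.length = m → u ∈ S → u ∉ t → ¬ G.Adj u (t.head ht) := by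
    intro t ht u hc hn hmem hlent huS hut hadj
    refine hmax ⟨u :: t, hc.cons ?_, List.nodup_cons.2 ⟨hut, hn⟩, ?_, by simp [hlent]⟩
    · intro y hy
      rw [List.head?_eq_head ht, Option.mem_some_iff] at hy
      exact hy ▸ hadj
    · intro x hx
      rcases List.mem_cons.1 hx with rfl | hx
      exacts [huS, hmem x hx]
  have hchain_rev : l.reverse.Chain' G.Adj :=
    List.isChain_reverse.mpr (hchain.imp fun _ _ hab => hab.symm)
  have hrevnil : l.reverse ≠ [] := by simpa using hlnil
  set a := l.head hlnil with ha
  set z := l.getLast hlnil with hz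
  have haS : a ∈ S := hmemS _ (List.head_mem hlnil)
  have hzS : z ∈ S := hmemS _ (List.getLast_mem hlnil)
  have hheadrev : l.reverse.head hrevnil = z := by
    have h1 := List.head?_reverse (l := l)
    rw [List.head?_eq_head hrevnil, List.getLast?_eq_getLast hlnil] at h1
    exact Option.some_injective _ h1
  have hnb_a : ∀ u, u ∈ S → G.Adj a u → u ∈ l := by
    intro u huS hadj
    by_contra hul
    exact hnoext l hlnil u hchain hnd hmemS hlen huS hul (hadj.symm)
  have hnb_z : ∀ u, u ∈ S → G.Adj z u → u ∈ l := by
    intro u huS hadj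
    by_contra hul
    refine hnoext l.reverse hrevnil u hchain_rev (List.nodup_reverse.2 hnd)
      (fun x hx => hmemS x (List.mem_reverse.1 hx)) (by simp [hlen]) huS
      (fun h => hul (List.mem_reverse.1 h)) ?_
    rw [hheadrev]
    exact hadj.symm
  have hlpos : 0 < l.length := List.length_pos_iff.2 hlnil
  have hget0 : l.get ⟨0, hlpos⟩ = a := List.get_mk_zero hlpos
  have hgetlast : l.get ⟨l.length - 1, by omega⟩ = z := (List.getLast_eq_getElem hlnil).symm
  have hidx_get : ∀ (u : V) (hu : u ∈ l),
      l.get ⟨List.idxOf u l, List.idxOf_lt_length_iff.2 hu⟩ = u :=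
    fun u hu => List.idxOf_get _
  -- index sets for the endpoints' neighbourhoods
  have hNa_mem : ∀ u ∈ S.filter (G.Adj a), u ∈ l ∧ List.idxOf u l ≠ 0 := by
    intro u hu
    rw [mem_filter] at hu
    have hul : u ∈ l := hnb_a u hu.1 hu.2
    refine ⟨hul, fun h0 => ?_⟩
    have hgu := hidx_get u hul
    have : l.get ⟨List.idxOf u l, List.idxOf_lt_length_iff.2 hul⟩ = l.get ⟨0, hlpos⟩ := by
      congr 1
      exact Fin.ext h0
    rw [hgu, hget0] at this
    exact G.ne_of_adj hu.2 this.symm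
  have hNz_mem : ∀ u ∈ S.filter (G.Adj z), u ∈ l ∧ List.idxOf u l ≠ l.length - 1 := by
    intro u hu
    rw [mem_filter] at hu
    have hul : u ∈ l := hnb_z u hu.1 hu.2
    refine ⟨hul, fun h0 => ?_⟩
    have hgu := hidx_get u hul
    have : l.get ⟨List.idxOf u l, List.idxOf_lt_length_iff.2 hul⟩ =
        l.get ⟨l.length - 1, by omega⟩ := by
      congr 1
      exact Fin.ext h0
    rw [hgu, hgetlast] at this
    exact G.ne_of_adj hu.2 this.symm
  have hinj : ∀ (N : Finset V), (∀ u ∈ N, u ∈ l) →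
      Set.InjOn (fun u => List.idxOf u l) N := by
    intro N hN u hu v hv h
    have hul := hN u hu
    have hvl := hN v hv
    have h1 := hidx_get u hul
    have h2 := hidx_get v hvl
    rw [← h1, ← h2]
    congr 1
    exact Fin.ext h
  have hinjA : Set.InjOn (fun u => List.idxOf u l - 1) (S.filter (G.Adj a)) := by
    intro u hu v hv h
    simp only [Finset.coe_filter, Set.mem_setOf_eq] at hu hv
    have hu' := hNa_mem u (mem_filter.2 hu)
    have hv' := hNa_mem v (mem_filter.2 hv)
    refine hinj (S.filter (G.Adj a)) (fun x hx => (hNa_mem x hx).1)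
      (by simpa using hu) (by simpa using hv) ?_
    simp only at h
    have hult := List.idxOf_lt_length_iff.2 hu'.1
    have hvlt := List.idxOf_lt_length_iff.2 hv'.1
    simp only
    omega
  have hinjB : Set.InjOn (fun u => List.idxOf u l) (S.filter (G.Adj z)) :=
    hinj _ (fun x hx => (hNz_mem x hx).1)
  have hcA : ((S.filter (G.Adj a)).image (fun u => List.idxOf u l - 1)).card = d G S a :=
    Finset.card_image_of_injOn hinjA
  have hcB : ((S.filter (G.Adj z)).image (fun u => List.idxOf u l)).card = d G S z :=
    Finset.card_image_of_injOn hinjB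
  have hAsub : (S.filter (G.Adj a)).image (fun u => List.idxOf u l - 1) ⊆
      Finset.range (l.length - 1) := by
    intro x hx
    obtain ⟨u, hu, rfl⟩ := Finset.mem_image.1 hx
    have h1 := hNa_mem u hu
    have h2 := List.idxOf_lt_length_iff.2 h1.1
    rw [Finset.mem_range]
    omega
  have hBsub : (S.filter (G.Adj z)).image (fun u => List.idxOf u l) ⊆
      Finset.range (l.length - 1) := by
    intro x hx
    obtain ⟨u, hu, rfl⟩ := Finset.mem_image.1 hx
    have h1 := hNz_mem u hu
    have h2 := List.idxOf_lt_length_iff.2 h1.1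
    rw [Finset.mem_range]
    omega
  have hdsum : k - 1 ≤ d G S a + d G S z := by
    have h1 := hdeg a haS
    have h2 := hdeg z hzS
    omega
  have hABcard := Finset.card_union_add_card_inter
    ((S.filter (G.Adj a)).image (fun u => List.idxOf u l - 1))
    ((S.filter (G.Adj z)).image (fun u => List.idxOf u l))
  have hUnion : (((S.filter (G.Adj a)).image (fun u => List.idxOf u l - 1)) ∪
      ((S.filter (G.Adj z)).image (fun u => List.idxOf u l))).card ≤ l.length - 1 := by
    refine le_trans (Finset.card_le_card (Finset.union_subset hAsub hBsub)) ?_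
    simp
  have hABne : (((S.filter (G.Adj a)).image (fun u => List.idxOf u l - 1)) ∩
      ((S.filter (G.Adj z)).image (fun u => List.idxOf u l))).Nonempty := by
    rw [← Finset.card_pos]
    omega
  obtain ⟨i, hiAB⟩ := hABne
  obtain ⟨hiA, hiB⟩ := Finset.mem_inter.1 hiAB
  obtain ⟨ua, huaNa, huai⟩ := Finset.mem_image.1 hiA
  obtain ⟨uz, huzNz, huzi⟩ := Finset.mem_image.1 hiB
  have h1 := hNa_mem ua huaNa
  have h2 := hNz_mem uz huzNz
  have hualt := List.idxOf_lt_length_iff.2 h1.1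
  have huzlt := List.idxOf_lt_length_iff.2 h2.1
  have hia : List.idxOf ua l = i + 1 := by omega
  have hi1 : i + 1 < l.length := by omega
  have hi0 : i < l.length := by omega
  have hua_get : l.get ⟨i + 1, hi1⟩ = ua := by
    have hg := hidx_get ua h1.1
    rw [← hg]
    congr 1
    exact Fin.ext hia.symm
  have huz_get : l.get ⟨i, hi0⟩ = uz := by
    have hg := hidx_get uz h2.1
    rw [← hg]
    congr 1
    exact Fin.ext huzi.symm
  have hAa : G.Adj a (l.get ⟨i + 1, hi1⟩) := by
    rw [hua_get]
    exact (mem_filter.1 huaNa).2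
  have hBz : G.Adj z (l.get ⟨i, hi0⟩) := by
    rw [huz_get]
    exact (mem_filter.1 huzNz).2
  -- the cycle through all vertices of l
  set c : List V := (l.drop (i + 1)).reverse ++ l.take (i + 1) with hc
  have hdropne : l.drop (i + 1) ≠ [] := by
    intro h
    have := congrArg List.length h
    simp [List.length_drop] at this
    omega
  have htakene : l.take (i + 1) ≠ [] := by
    intro h
    have := congrArg List.length h
    simp [List.length_take] at this
    exact hlnil this
  have hperm : c.Perm l := by
    have p1 : c.Perm (l.drop (i + 1) ++ l.take (i + 1)) :=
      ((l.drop (i + 1)).reverse_perm).append_right _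
    have p2 : (l.drop (i + 1) ++ l.take (i + 1)).Perm (l.take (i + 1) ++ l.drop (i + 1)) :=
      List.perm_append_comm
    have p3 := p1.trans p2
    rwa [List.take_append_drop] at p3
  have hc_chain : c.Chain' G.Adj := by
    refine List.IsChain.append ?_ (hchain.take _) ?_
    · exact List.isChain_reverse.mpr ((hchain.drop _).imp fun _ _ hab => hab.symm)
    · intro x hx y hy
      rw [List.getLast?_reverse, List.head?_drop,
        List.getElem?_eq_getElem hi1, Option.mem_some_iff] at hx
      rw [List.head?_take, if_neg (by omega), List.head?_eq_head hlnil,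
        Option.mem_some_iff] at hy
      subst hx
      subst hy
      have : l[i + 1]'hi1 = l.get ⟨i + 1, hi1⟩ := (List.get_eq_getElem (l := l) (i := ⟨i + 1, hi1⟩)).symm
      rw [this]
      exact hAa.symm
  have hchead : c.head? = some z := by
    rw [hc, List.head?_append_of_ne_nil _ (by simpa using hdropne), List.head?_reverse,
      List.getLast?_drop, if_neg (by omega), List.getLast?_eq_getLast hlnil]
  have hclast : c.getLast? = some (l.get ⟨i, hi0⟩) := by
    rw [hc, List.getLast?_append_of_ne_nil _ htakene, List.getLast?_take, if_neg (by omega)]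
    have : i + 1 - 1 = i := by omega
    rw [this, List.getElem?_eq_getElem hi0]
    simp [List.get_eq_getElem]
  have hcyc : ∀ x ∈ c.getLast?, ∀ y ∈ c.head?, G.Adj x y := by
    intro x hx y hy
    rw [hclast, Option.mem_some_iff] at hx
    rw [hchead, Option.mem_some_iff] at hy
    subst hx
    subst hy
    exact hBz.symm
  -- a vertex outside l adjacent to some vertex of l
  obtain ⟨u1, hu1S, hu1l⟩ : ∃ u1 ∈ S, u1 ∉ l := by
    by_contra h
    push_neg at h
    have hsub : S ⊆ l.toFinset := fun x hx => List.mem_toFinset.2 (h x hx)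
    have := Finset.card_le_card hsub
    rw [List.toFinset_card_of_nodup hnd] at this
    omega
  obtain ⟨w, hwl, u, huS, hul, hadj⟩ : ∃ w, w ∈ l ∧ ∃ u ∈ S, u ∉ l ∧ G.Adj w u := by
    by_contra h
    push_neg at h
    have hstay : ∀ x, Relation.ReflTransGen (fun p q => p ∈ S ∧ q ∈ S ∧ G.Adj p q) a x →
        x ∈ l := by
      intro x hx
      induction hx with
      | refl => exact List.head_mem hlnil
      | tail _ hbc ih =>
        by_contra hc'
        exact h _ ih _ hbc.2.1 hc' hbc.2.2
    exact hu1l (hstay u1 (hconn a haS u1 hu1S))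
  -- rotate the cycle to start at w and extend by u
  have hwc : w ∈ c := hperm.mem_iff.2 hwl
  obtain ⟨⟨j, hjlt⟩, hgetj⟩ := List.mem_iff_get.1 hwc
  have hclen : c.length = l.length := hperm.length_eq
  have hrot : (c.rotate j).Chain' G.Adj :=
    chain'_rotate_of_cyclic hc_chain hcyc (le_of_lt hjlt)
  have hcdropne : c.drop j ≠ [] := by
    intro h
    have := congrArg List.length h
    simp [List.length_drop] at this
    omega
  have hrothead : (c.rotate j).head? = some w := by
    rw [List.rotate_eq_drop_append_take (le_of_lt hjlt),
      List.head?_append_of_ne_nil _ hcdropne, List.head?_drop,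
      List.getElem?_eq_getElem hjlt]
    rw [← List.get_eq_getElem (l := c) (i := ⟨j, hjlt⟩), hgetj]
  refine hmax ⟨u :: c.rotate j, ?_, ?_, ?_, ?_⟩
  · refine hrot.cons ?_
    intro y hy
    rw [hrothead, Option.mem_some_iff] at hy
    subst hy
    exact hadj.symm
  · refine List.nodup_cons.2 ⟨?_, List.nodup_rotate.2 (hperm.nodup_iff.2 hnd)⟩
    intro hmem'
    exact hul (hperm.mem_iff.1 (List.mem_rotate.1 hmem'))
  · intro x hx
    rcases List.mem_cons.1 hx with rfl | hx
    · exact huS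
    · exact hmemS x (hperm.mem_iff.1 (List.mem_rotate.1 hx))
  · simp [List.length_rotate, hclen, hlen]

lemma main (k : ℕ) (hk : 2 ≤ k)
    (hfree : ∀ l : List V, l.Chain' G.Adj → l.Nodup → l.length < k) :
    ∀ S : Finset V, E2 G S ≤ (k - 2) * S.card := by
  intro S
  induction S using Finset.strongInduction with
  | _ S ih =>
  rcases S.eq_empty_or_nonempty with rfl | ⟨v0, hv0⟩
  · simp [E2]
  by_cases hsmall : ∃ v ∈ S, 2 * d G S v ≤ k - 2
  · obtain ⟨v, hv, hdv⟩ := hsmall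
    have hsub : S.erase v ⊂ S := Finset.erase_ssubset hv
    have hIH := ih _ hsub
    have hcard : (S.erase v).card = S.card - 1 := card_erase_of_mem hv
    have hE := E2_erase G S v hv
    have h1 : 1 ≤ S.card := Finset.card_pos.2 ⟨v, hv⟩
    rw [hcard] at hIH
    obtain ⟨c, hc⟩ := Nat.exists_eq_add_of_le h1
    calc E2 G S = E2 G (S.erase v) + 2 * d G S v := hE
      _ ≤ (k - 2) * (S.card - 1) + (k - 2) := Nat.add_le_add hIH hdv
      _ = (k - 2) * S.card := by
          rw [hc, Nat.add_sub_cancel_left, Nat.add_comm 1 c, Nat.mul_succ]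
  · push_neg at hsmall
    have hdeg : ∀ v ∈ S, k - 1 ≤ 2 * d G S v := by
      intro v hv
      have := hsmall v hv
      omega
    classical
    set r : V → V → Prop := fun a b => a ∈ S ∧ b ∈ S ∧ G.Adj a b with hr
    set A : Finset V := S.filter (fun u => Relation.ReflTransGen r v0 u) with hA
    have hAS : A ⊆ S := filter_subset _ _
    have hv0A : v0 ∈ A := mem_filter.2 ⟨hv0, Relation.ReflTransGen.refl⟩
    by_cases hconn : A = S
    · -- S is connected
      by_cases hbig : k ≤ S.card
      · exact absurd (big_component_false G k hk S hfree hdeg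
          (fun u hu w hw => by
            have hu' : Relation.ReflTransGen r v0 u := (mem_filter.1 (hconn ▸ hu)).2
            have hw' : Relation.ReflTransGen r v0 w := (mem_filter.1 (hconn ▸ hw)).2
            have hsymm : Symmetric r := by
              rintro a b ⟨ha, hb, hab⟩; exact ⟨hb, ha, hab.symm⟩
            exact Relation.ReflTransGen.trans (by haveI : Std.Symm r := ⟨fun a b h => hsymm h⟩; exact Std.Symm.symm _ _ hu') hw') hbig) (fun h => h)
      · push_neg at hbig
        have : E2 G S ≤ (S.card - 1) * S.card := by
          unfold E2
          calc ∑ v ∈ S, d G S v ≤ ∑ _v ∈ S, (S.card - 1) := by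
                exact Finset.sum_le_sum fun v hv => d_le G S v hv
            _ = S.card * (S.card - 1) := by rw [Finset.sum_const, smul_eq_mul]
            _ = (S.card - 1) * S.card := Nat.mul_comm _ _
        have h2 : S.card - 1 ≤ k - 2 := by omega
        calc E2 G S ≤ (S.card - 1) * S.card := this
          _ ≤ (k - 2) * S.card := Nat.mul_le_mul_right _ h2
    · -- S splits
      have hAss : A ⊂ S := ⟨hAS, fun h => hconn (Finset.Subset.antisymm hAS h)⟩
      have hBne : (S \ A).Nonempty := by
        obtain ⟨x, hxS, hxA⟩ := Finset.exists_of_ssubset hAss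
        exact ⟨x, mem_sdiff.2 ⟨hxS, hxA⟩⟩
      have hBss : S \ A ⊂ S := by
        refine Finset.sdiff_ssubset ?_ ⟨v0, hv0A⟩
        exact hAS
      have hcross : ∀ a ∈ A, ∀ b ∈ S \ A, ¬ G.Adj a b := by
        intro a ha b hb hadj
        rcases mem_sdiff.1 hb with ⟨hbS, hbA⟩
        have : Relation.ReflTransGen r v0 b :=
          Relation.ReflTransGen.tail (mem_filter.1 ha).2 ⟨hAS ha, hbS, hadj⟩
        exact hbA (mem_filter.2 ⟨hbS, this⟩)
      have hsplit := E2_split G S A hAS hcross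
      have hIHA := ih _ hAss
      have hIHB := ih _ hBss
      have hcards : A.card + (S \ A).card = S.card := by
        rw [Finset.card_sdiff_of_subset hAS]
        have := Finset.card_le_card hAS
        omega
      calc E2 G S = E2 G A + E2 G (S \ A) := hsplit
        _ ≤ (k - 2) * A.card + (k - 2) * (S \ A).card := Nat.add_le_add hIHA hIHB
        _ = (k - 2) * S.card := by rw [← Nat.mul_add, hcards]

end EG

/-- Erdős–Gallai: an `n`-vertex graph containing no path on `k` vertices
(`k ≥ 2`) has at most `(k-2)n/2` edges. -/
theorem erdos_gallai_paths (n k : ℕ) (hk : 2 ≤ k) (G : SimpleGraph (Fin n))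
    [DecidableRel G.Adj]
    (hPfree : ∀ (u v : Fin n) (p : G.Walk u v), p.IsPath → p.length + 1 < k) :
    (G.edgeFinset.card : ℝ) ≤ (k - 2) * n / 2 := by
  have hfree := EG.chain_lt G hk hPfree
  have hmain := EG.main G k hk hfree Finset.univ
  have hE2 : EG.E2 G Finset.univ = 2 * G.edgeFinset.card := by
    rw [← SimpleGraph.sum_degrees_eq_twice_card_edges]
    unfold EG.E2 EG.d
    refine Finset.sum_congr rfl fun v _ => ?_
    rw [SimpleGraph.degree, SimpleGraph.neighborFinset_eq_filter]
  rw [hE2, Finset.card_univ, Fintype.card_fin] at hmain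
  have hcast : (2 * G.edgeFinset.card : ℝ) ≤ ((k : ℝ) - 2) * n := by
    have h2 : ((k - 2 : ℕ) : ℝ) = (k : ℝ) - 2 := by
      push_cast [Nat.cast_sub hk]
      ring
    calc (2 * G.edgeFinset.card : ℝ) = ((2 * G.edgeFinset.card : ℕ) : ℝ) := by push_cast; ring
      _ ≤ (((k - 2) * n : ℕ) : ℝ) := by exact_mod_cast hmain
      _ = ((k : ℝ) - 2) * n := by rw [Nat.cast_mul, h2]
  linarith
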